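/- arXiv:1107.4129 — 3 statements merged into one kernel-verified Lean document; each statement's English description precedes it below -/
import Mathlib

section
/- Every finitely generated nilpotent group contains a torsion-free subgroup of finite index. -/
open Subgroup
open scoped commutatorElement
open scoped IsMulCommutative

section Aux

variable {G : Type*} [Group G]

private lemma comm_mul_left' (v w g : G) : ⁅v * w, g⁆ = v * ⁅w, g⁆ * v⁻¹ * ⁅v, g⁆ := by
  simp only [commutatorElement_def]
  group

private lemma comm_mul_right' (z g h : G) : ⁅z, g * h⁆ = ⁅z, g⁆ * (g * ⁅z, h⁆ * g⁻¹) := by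
  simp only [commutatorElement_def]
  group

private lemma conj_of_center {c : G} (hc : c ∈ center G) (x : G) : x * c * x⁻¹ = c := by
  rw [Subgroup.mem_center_iff.mp hc x]
  group

/-- If the center of a f.g. group is torsion, then the center of `G ⧸ center G` is torsion. -/
private lemma center_quotient_center_torsion [Group.FG G]
    (hZ : ∀ c ∈ center G, IsOfFinOrder c) :
    ∀ z ∈ center (G ⧸ center G), IsOfFinOrder z := by
  intro zbar hzbar
  obtain ⟨z, rfl⟩ := QuotientGroup.mk'_surjective (center G) zbar
  -- all commutators with z are central
  have hcom : ∀ g : G, ⁅z, g⁆ ∈ center G := by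
    intro g
    rw [← QuotientGroup.ker_mk' (center G), MonoidHom.mem_ker, map_commutatorElement]
    exact commutatorElement_eq_one_iff_mul_comm.mpr
      (Subgroup.mem_center_iff.mp hzbar ((QuotientGroup.mk' (center G)) g)).symm
  obtain ⟨S, hS⟩ := (Group.FG.out : (⊤ : Subgroup G).FG)
  classical
  set m : ℕ := ∏ s ∈ S, orderOf ⁅z, s⁆ with hm
  have hmpos : 0 < m := by
    refine Finset.prod_pos fun s _ => ?_
    exact (hZ _ (hcom s)).orderOf_pos
  -- ψ : g ↦ ⁅z,g⁆ ^ m is a homomorphism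
  have hψmul : ∀ g h : G, ⁅z, g * h⁆ ^ m = ⁅z, g⁆ ^ m * ⁅z, h⁆ ^ m := by
    intro g h
    have h1 : ⁅z, g * h⁆ = ⁅z, g⁆ * ⁅z, h⁆ := by
      rw [comm_mul_right', conj_of_center (hcom h) g]
    have h2 : Commute ⁅z, g⁆ ⁅z, h⁆ :=
      (Subgroup.mem_center_iff.mp (hcom h) ⁅z, g⁆)
    rw [h1, h2.mul_pow]
  let ψ : G →* G := MonoidHom.mk' (fun g => ⁅z, g⁆ ^ m) hψmul
  have hψ1 : ∀ g : G, ⁅z, g⁆ ^ m = 1 := by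
    have hker : (⊤ : Subgroup G) ≤ ψ.ker := by
      rw [← hS, closure_le]
      intro s hs
      have : orderOf ⁅z, s⁆ ∣ m := Finset.dvd_prod_of_mem _ hs
      simpa [ψ, MonoidHom.mem_ker] using orderOf_dvd_iff_pow_eq_one.mp this
    intro g
    exact hker (mem_top g)
  -- ⁅z ^ k, g⁆ = ⁅z, g⁆ ^ k
  have hpow : ∀ (k : ℕ) (g : G), ⁅z ^ k, g⁆ = ⁅z, g⁆ ^ k := by
    intro k g
    induction k with
    | zero => simp
    | succ k ih =>
      rw [pow_succ', comm_mul_left', ih,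
        conj_of_center (pow_mem (hcom g) k) z, ← pow_succ]
  have hzm : z ^ m ∈ center G := by
    rw [Subgroup.mem_center_iff]
    intro g
    have h1 : ⁅z ^ m, g⁆ = 1 := (hpow m g).trans (hψ1 g)
    exact (commutatorElement_eq_one_iff_mul_comm.mp h1).symm
  refine isOfFinOrder_iff_pow_eq_one.mpr ⟨m, hmpos, ?_⟩
  rw [← map_pow]
  exact (QuotientGroup.eq_one_iff _).mpr hzm

private lemma ucs_quotient_center_eq_top {G : Type*} [Group G] {n : ℕ}
    (h : Subgroup.upperCentralSeries G (n + 1) = ⊤) :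
    Subgroup.upperCentralSeries (G ⧸ center G) n = ⊤ := by
  have hcomap := Subgroup.comap_upperCentralSeries_quotient_center (G := G) n
  rw [eq_top_iff']
  intro x
  obtain ⟨y, rfl⟩ := QuotientGroup.mk'_surjective (center G) x
  have hy : y ∈ comap (QuotientGroup.mk' (center G))
      (Subgroup.upperCentralSeries (G ⧸ center G) n) := by
    rw [hcomap, h]
    trivial
  exact hy

end Aux

universe u

/-- A f.g. nilpotent group (witnessed by upper central series) whose center is torsion
is torsion. -/
private lemma isTorsion_of_center_isTorsion :
    ∀ (n : ℕ) (G : Type u) [Group G] [Group.FG G],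
      Subgroup.upperCentralSeries G n = ⊤ → (∀ c ∈ Subgroup.center G, IsOfFinOrder c) →
      ∀ g : G, IsOfFinOrder g := by
  intro n
  induction n with
  | zero =>
    intro G _ _ h _ g
    have hg : g ∈ Subgroup.upperCentralSeries G 0 := h ▸ mem_top g
    rw [Subgroup.upperCentralSeries_zero, Subgroup.mem_bot] at hg
    simp [hg]
  | succ n ih =>
    intro G _ _ h hZ g
    have hq : Subgroup.upperCentralSeries (G ⧸ center G) n = ⊤ := ucs_quotient_center_eq_top h
    have hgbar : IsOfFinOrder ((QuotientGroup.mk' (center G)) g) :=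
      ih (G ⧸ center G) hq (center_quotient_center_torsion hZ) _
    obtain ⟨k, kpos, hk⟩ := hgbar.exists_pow_eq_one
    have hgk : g ^ k ∈ center G := by
      rw [← map_pow] at hk
      exact (QuotientGroup.eq_one_iff _).mp hk
    obtain ⟨j, jpos, hj⟩ := (hZ _ hgk).exists_pow_eq_one
    refine isOfFinOrder_iff_pow_eq_one.mpr ⟨k * j, Nat.mul_pos kpos jpos, ?_⟩
    rw [pow_mul, hj]

/-- A f.g. torsion commutative group is finite. -/
private lemma finite_of_fg_torsion_comm {A : Type*} [CommGroup A] [Group.FG A]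
    (h : ∀ a : A, IsOfFinOrder a) : Finite A := by
  classical
  obtain ⟨S, hS⟩ := (Group.FG.out : (⊤ : Subgroup A).FG)
  have hfin : ∀ S : Finset A, ((Subgroup.closure (S : Set A) : Subgroup A) : Set A).Finite := by
    intro S
    induction S using Finset.induction_on with
    | empty => simp [Subgroup.closure_empty]
    | @insert a S ha ih =>
      have h1 : Subgroup.closure ((insert a S : Finset A) : Set A)
          = Subgroup.zpowers a ⊔ Subgroup.closure (S : Set A) := by
        rw [Finset.coe_insert, Set.insert_eq, Subgroup.closure_union, zpowers_eq_closure]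
      rw [h1, Subgroup.mul_normal]
      exact Set.Finite.mul (h a).finite_zpowers ih
  have := hfin S
  rw [hS] at this
  rw [← Set.finite_univ_iff]
  simpa using this

/-- A f.g. torsion nilpotent group (witnessed by upper central series) is finite. -/
private lemma finite_of_fg_torsion :
    ∀ (n : ℕ) (G : Type u) [Group G] [Group.FG G],
      Subgroup.upperCentralSeries G n = ⊤ → (∀ g : G, IsOfFinOrder g) → Finite G := by
  intro n
  induction n with
  | zero =>
    intro G _ _ h _
    have h1 : ∀ g : G, g = 1 := by
      intro g
      have hg : g ∈ Subgroup.upperCentralSeries G 0 := h ▸ mem_top g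
      rwa [Subgroup.upperCentralSeries_zero, Subgroup.mem_bot] at hg
    have : Subsingleton G := ⟨fun a b => by rw [h1 a, h1 b]⟩
    exact Finite.of_subsingleton
  | succ n ih =>
    intro G _ _ h htor
    have hq : Subgroup.upperCentralSeries (G ⧸ center G) n = ⊤ := ucs_quotient_center_eq_top h
    haveI : Finite (G ⧸ center G) := by
      refine ih _ hq fun x => ?_
      obtain ⟨y, rfl⟩ := QuotientGroup.mk'_surjective (center G) x
      exact (QuotientGroup.mk' (center G)).isOfFinOrder (htor y)
    haveI : (center G).FiniteIndex := Subgroup.finiteIndex_of_finite_quotient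
    haveI : Group.FG (center G) := Subgroup.fg_of_index_ne_zero _
    haveI : Finite (center G) := by
      refine finite_of_fg_torsion_comm fun a => ?_
      have hcoe : IsOfFinOrder (a : G) := htor _
      rw [← orderOf_pos_iff] at hcoe ⊢
      rwa [orderOf_coe] at hcoe
    exact Finite.of_subgroup_quotient (center G)

/-- The old Mathlib `Monoid.IsTorsionFree` (removed upstream), restated verbatim. -/
def Monoid.IsTorsionFree (G : Type*) [Monoid G] : Prop :=
  ∀ g : G, g ≠ 1 → ¬IsOfFinOrder g

theorem stmt5 {G : Type*} [Group G] [Group.IsNilpotent G] [Group.FG G] :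
    ∃ H : Subgroup G, H.FiniteIndex ∧ Monoid.IsTorsionFree H := by
  classical
  -- the set of normal subgroups with no nontrivial torsion elements
  set S : Set (Subgroup G) := {N | N.Normal ∧ ∀ x ∈ N, IsOfFinOrder x → x = 1} with hSdef
  have hchain : ∀ c ⊆ S, IsChain (· ≤ ·) c → ∀ y ∈ c, ∃ ub ∈ S, ∀ z ∈ c, z ≤ ub := by
    intro c hcS hc y hy
    refine ⟨sSup c, ⟨⟨?_⟩, ?_⟩, fun z hz => le_sSup hz⟩
    · intro x hx g
      obtain ⟨N, hNc, hxN⟩ :=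
        (Subgroup.mem_sSup_of_directedOn ⟨y, hy⟩ hc.directedOn).mp hx
      exact le_sSup hNc ((hcS hNc).1.conj_mem x hxN g)
    · intro x hx hfin
      obtain ⟨N, hNc, hxN⟩ :=
        (Subgroup.mem_sSup_of_directedOn ⟨y, hy⟩ hc.directedOn).mp hx
      exact (hcS hNc).2 x hxN hfin
  have hbot : (⊥ : Subgroup G) ∈ S := by
    refine ⟨inferInstance, fun x hx _ => ?_⟩
    rwa [Subgroup.mem_bot] at hx
  obtain ⟨N, -, hN⟩ := zorn_le_nonempty₀ S hchain ⊥ hbot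
  obtain ⟨hNnormal, hNtor⟩ := hN.prop
  haveI := hNnormal
  -- the center of G ⧸ N is torsion
  have hZtor : ∀ z ∈ center (G ⧸ N), IsOfFinOrder z := by
    intro z hz
    by_cases hz1 : z = 1
    · simp [hz1]
    have hle : zpowers z ≤ center (G ⧸ N) := zpowers_le.mpr hz
    have hzpn : (zpowers z).Normal := by
      refine ⟨fun x hx g => ?_⟩
      have hxz : g * x * g⁻¹ = x := by
        rw [Subgroup.mem_center_iff.mp (hle hx) g]
        group
      rwa [hxz]
    set P : Subgroup G := comap (QuotientGroup.mk' N) (zpowers z) with hP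
    haveI hPnormal : P.Normal := hzpn.comap _
    have hNleP : N ≤ P := by
      intro x hx
      have hx1 : (QuotientGroup.mk' N) x = 1 := (QuotientGroup.eq_one_iff x).mpr hx
      rw [hP, mem_comap, hx1]
      exact one_mem _
    have hPnotS : P ∉ S := by
      intro hPS
      obtain ⟨g, hg⟩ := QuotientGroup.mk'_surjective N z
      have hgP : g ∈ P := by
        rw [hP, mem_comap, hg]
        exact Subgroup.mem_zpowers z
      have : g ∈ N := hN.2 hPS hNleP hgP
      exact hz1 (by rw [← hg]; exact (QuotientGroup.eq_one_iff g).mpr this)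
    have hex : ¬∀ x ∈ P, IsOfFinOrder x → x = 1 := fun htor => hPnotS ⟨hPnormal, htor⟩
    push_neg at hex
    obtain ⟨x, hxP, hxfin, hx1⟩ := hex
    have hmkx : (QuotientGroup.mk' N) x ∈ zpowers z := hxP
    rw [Subgroup.mem_zpowers_iff] at hmkx
    obtain ⟨k, hk⟩ := hmkx
    have hmkx1 : (QuotientGroup.mk' N) x ≠ 1 := by
      intro h1
      exact hx1 (hNtor x ((QuotientGroup.eq_one_iff x).mp h1) hxfin)
    have hk0 : k ≠ 0 := by
      rintro rfl
      rw [zpow_zero] at hk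
      exact hmkx1 hk.symm
    have hfinmk : IsOfFinOrder ((QuotientGroup.mk' N) x) :=
      (QuotientGroup.mk' N).isOfFinOrder hxfin
    obtain ⟨j, hj0, hj⟩ := hfinmk.exists_pow_eq_one
    refine isOfFinOrder_iff_zpow_eq_one.mpr ⟨k * j, ?_, ?_⟩
    · exact mul_ne_zero hk0 (Int.natCast_ne_zero.mpr hj0.ne')
    · rw [zpow_mul, hk, zpow_natCast, hj]
  -- G ⧸ N is finite
  obtain ⟨m, hm⟩ := Group.IsNilpotent.nilpotent (G ⧸ N)
  haveI : Finite (G ⧸ N) := by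
    let e : (G ⧸ N) ≃* (G ⧸ N) := MulEquiv.refl _
    exact finite_of_fg_torsion m _ hm (isTorsion_of_center_isTorsion m _ hm hZtor)
  haveI : N.FiniteIndex := Subgroup.finiteIndex_of_finite_quotient
  refine ⟨N, inferInstance, ?_⟩
  intro x hx1 hxfin
  apply hx1
  have hcoe : IsOfFinOrder (x : G) := by
    rw [← orderOf_pos_iff] at hxfin ⊢
    rwa [orderOf_coe]
  have : (x : G) = 1 := hNtor x x.2 hcoe
  exact Subtype.ext this
end

section
/- Let α be an algebraic integer with |α| = 1 such that every Galois conjugate of α (i.e., every root of its minimal polynomial over ℚ) also has absolute value 1. Then α is a root of unity. -/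
/-- Kronecker's theorem: an algebraic integer of absolute value 1, all of whose
Galois conjugates have absolute value 1, is a root of unity. -/
theorem stmt9 (α : ℂ) (hint : IsIntegral ℤ α) (habs : ‖α‖ = 1)
    (hconj : ∀ β : ℂ, Polynomial.aeval β (minpoly ℚ α) = 0 → ‖β‖ = 1) :
    ∃ n : ℕ, 0 < n ∧ α ^ n = 1 := by
  have hQ : IsIntegral ℚ α := hint.tower_top
  let K := IntermediateField.adjoin ℚ {α}
  haveI : FiniteDimensional ℚ K :=
    IntermediateField.adjoin.finiteDimensional hQ
  haveI : NumberField K := ⟨⟩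
  set x : K := IntermediateField.AdjoinSimple.gen ℚ α with hx
  have hxint : IsIntegral ℤ x := by
    rwa [← isIntegral_algebraMap_iff (algebraMap K ℂ).injective]
  have hmin : minpoly ℚ x = minpoly ℚ α := by
    have := minpoly.algebraMap_eq (A := ℚ) (algebraMap K ℂ).injective x
    rw [IntermediateField.AdjoinSimple.algebraMap_gen] at this; exact this.symm
  have hnorm : ∀ φ : K →+* ℂ, ‖φ x‖ = 1 := by
    intro φ
    have : Polynomial.aeval (φ x) (minpoly ℚ α) = 0 := by
      rw [← hmin]
      exact (Polynomial.aeval_algHom_apply φ.toRatAlgHom x _).trans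
        (by rw [minpoly.aeval, map_zero])
    simpa using hconj _ this
  obtain ⟨n, hn, h1⟩ := NumberField.Embeddings.pow_eq_one_of_norm_eq_one K ℂ hxint hnorm
  refine ⟨n, hn, ?_⟩
  have : algebraMap K ℂ (x ^ n) = algebraMap K ℂ 1 := by rw [h1]
  simpa [hx, IntermediateField.AdjoinSimple.coe_gen] using this
end

section
/- Let N be a finitely generated torsion-free nilpotent group of nilpotency class k, and let φ be an automorphism of N that acts trivially on the abelianization N^{ab}. Then for each g ∈ N, there is a constant M (depending on g) such that ℓ(φ^n(g)) ≤ M·n^{k-1} for all n ≥ 1, where ℓ is word length with respect to a fixed finite generating set. In particular K_φ = 1. -/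
open Filter Topology
open scoped commutatorElement

/-- Word length of `g` with respect to a generating set `S`. -/
noncomputable def wordLength {G : Type*} [Group G] (S : Set G) (g : G) : ℕ :=
  sInf {n | ∃ l : List G, (∀ x ∈ l, x ∈ S ∨ x⁻¹ ∈ S) ∧ l.length = n ∧ l.prod = g}

/-- The word-growth entropy `K_φ = max_{s ∈ S} lim_n ℓ(φⁿ(s))^{1/n}` of an
automorphism `φ`, with respect to the generating set `S`. -/
noncomputable def entropy {G : Type*} [Group G] (S : Set G) (φ : MulAut G) : ℝ :=
  ⨆ s ∈ S, Filter.limsup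
    (fun n : ℕ => ((max (wordLength S ((φ ^ n) s)) 1 : ℕ) : ℝ) ^ (1 / (n : ℝ)))
    Filter.atTop

section Aux

variable {G : Type*} [Group G]

private lemma lcs_succ' (n : ℕ) :
    (⊤ : Subgroup G).lowerCentralSeries (n + 1) = ⁅(⊤ : Subgroup G).lowerCentralSeries n, (⊤ : Subgroup G)⁆ := rfl

/-- The commutator estimate `⁅γᵢ, γⱼ⁆ ≤ γ_{i+j+1}` (with Mathlib's zero-based indexing). -/
private lemma lcs_comm_le (j i : ℕ) :
    ⁅(⊤ : Subgroup G).lowerCentralSeries i, (⊤ : Subgroup G).lowerCentralSeries j⁆ ≤ (⊤ : Subgroup G).lowerCentralSeries (i + j + 1) := by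
  induction j generalizing i with
  | zero =>
      rw [lowerCentralSeries_zero, ← lcs_succ' i]
  | succ j ih =>
      set L := (⊤ : Subgroup G).lowerCentralSeries (i + (j + 1) + 1) with hL
      set f := QuotientGroup.mk' L
      have hker : f.ker = L := QuotientGroup.ker_mk' L
      have h2 : ⁅⁅Subgroup.map f ((⊤ : Subgroup G).lowerCentralSeries i), Subgroup.map f ((⊤ : Subgroup G).lowerCentralSeries j)⁆,
          Subgroup.map f (⊤ : Subgroup G)⁆ = ⊥ := by
        rw [← Subgroup.map_commutator, ← Subgroup.map_commutator, Subgroup.map_eq_bot_iff, hker]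
        calc ⁅⁅(⊤ : Subgroup G).lowerCentralSeries i, (⊤ : Subgroup G).lowerCentralSeries j⁆, (⊤ : Subgroup G)⁆
            ≤ ⁅(⊤ : Subgroup G).lowerCentralSeries (i + j + 1), (⊤ : Subgroup G)⁆ :=
              Subgroup.commutator_mono (ih i) le_rfl
          _ = (⊤ : Subgroup G).lowerCentralSeries (i + j + 2) := (lcs_succ' _).symm
          _ ≤ L := lowerCentralSeries_antitone _ (by omega)
      have h1 : ⁅⁅Subgroup.map f (⊤ : Subgroup G), Subgroup.map f ((⊤ : Subgroup G).lowerCentralSeries i)⁆,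
          Subgroup.map f ((⊤ : Subgroup G).lowerCentralSeries j)⁆ = ⊥ := by
        rw [← Subgroup.map_commutator, ← Subgroup.map_commutator, Subgroup.map_eq_bot_iff, hker]
        calc ⁅⁅(⊤ : Subgroup G), (⊤ : Subgroup G).lowerCentralSeries i⁆, (⊤ : Subgroup G).lowerCentralSeries j⁆
            = ⁅(⊤ : Subgroup G).lowerCentralSeries (i + 1), (⊤ : Subgroup G).lowerCentralSeries j⁆ := by
              rw [Subgroup.commutator_comm (⊤ : Subgroup G) ((⊤ : Subgroup G).lowerCentralSeries i), ← lcs_succ']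
          _ ≤ (⊤ : Subgroup G).lowerCentralSeries (i + 1 + j + 1) := ih (i + 1)
          _ ≤ L := lowerCentralSeries_antitone _ (by omega)
      have h3 := Subgroup.commutator_commutator_eq_bot_of_rotate h1 h2
      rw [← Subgroup.map_commutator, ← Subgroup.map_commutator, Subgroup.map_eq_bot_iff, hker] at h3
      calc ⁅(⊤ : Subgroup G).lowerCentralSeries i, (⊤ : Subgroup G).lowerCentralSeries (j + 1)⁆
          = ⁅⁅(⊤ : Subgroup G).lowerCentralSeries j, (⊤ : Subgroup G)⁆, (⊤ : Subgroup G).lowerCentralSeries i⁆ := by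
            rw [lcs_succ', Subgroup.commutator_comm]
        _ ≤ L := h3

/-- A commutator identity with central elements. -/
private lemma comm_aux {Q : Type*} [Group Q] (a y b z : Q)
    (ha : ∀ w, a * w = w * a) (hyb : y * b = b * y)
    (hc : ∀ w, ⁅y, z⁆ * w = w * ⁅y, z⁆) :
    ⁅a * y, b * z⁆ = ⁅y, z⁆ := by
  have ha' : ∀ u v : Q, a * u * a⁻¹ * v = u * v := by
    intro u v; rw [ha u]; group
  have h1 : ⁅a * y, b * z⁆ = a * (y * (b * z) * y⁻¹) * a⁻¹ * (b * z)⁻¹ := by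
    rw [commutatorElement_def]; group
  rw [h1, ha']
  have h2 : y * (b * z) * y⁻¹ * (b * z)⁻¹ = b * (y * z * y⁻¹ * z⁻¹) * b⁻¹ := by
    rw [← mul_assoc y b, hyb]; group
  rw [h2, ← commutatorElement_def, ← hc b]; group

/-- If `φ` acts trivially on the abelianization, it acts trivially on each quotient
`γᵢ/γ_{i+1}` of the lower central series. -/
private lemma defect_mem (φ : MulAut G) (htriv : ∀ g : G, φ g * g⁻¹ ∈ (⊤ : Subgroup G).lowerCentralSeries 1) :
    ∀ i : ℕ, ∀ x ∈ (⊤ : Subgroup G).lowerCentralSeries i, φ x * x⁻¹ ∈ (⊤ : Subgroup G).lowerCentralSeries (i + 1) := by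
  intro i
  induction i with
  | zero => intro x _; exact htriv x
  | succ i ih =>
      set K := (⊤ : Subgroup G).lowerCentralSeries (i + 2) with hK
      set π := QuotientGroup.mk' K with hπ
      have hmem : ∀ u : G, φ u * u⁻¹ ∈ K ↔ π (φ u) = π u := by
        intro u
        rw [QuotientGroup.mk'_eq_mk']
        constructor
        · intro h
          refine ⟨(φ u)⁻¹ * u, ?_, by group⟩
          exact (Subgroup.lowerCentralSeries_normal _ _).mem_comm (by simpa [-Subgroup.lowerCentralSeries_succ] using K.inv_mem h)
        · rintro ⟨z, hz, hzz⟩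
          have hz2 : z = (φ u)⁻¹ * u := eq_inv_mul_iff_mul_eq.mpr hzz
          rw [hz2] at hz
          exact (Subgroup.lowerCentralSeries_normal _ _).mem_comm (by simpa [-Subgroup.lowerCentralSeries_succ] using K.inv_mem hz)
      have hcomm : ∀ u v : G, ⁅u, v⁆ ∈ K → π u * π v = π v * π u := by
        intro u v h
        have h1 : ⁅π u, π v⁆ = 1 := by
          rw [← map_commutatorElement]
          exact (QuotientGroup.eq_one_iff _).mpr h
        exact commutatorElement_eq_one_iff_mul_comm.mp h1
      intro x hx
      rw [hmem]
      have : (⊤ : Subgroup G).lowerCentralSeries (i + 1) ≤ MonoidHom.eqLocus (π.comp φ.toMonoidHom) π := by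
        rw [lcs_succ', Subgroup.commutator_le]
        intro y hy z _
        show π (φ ⁅y, z⁆) = π ⁅y, z⁆
        have hyz : ⁅y, z⁆ ∈ (⊤ : Subgroup G).lowerCentralSeries (i + 1) := by
          rw [lcs_succ']
          exact Subgroup.commutator_mem_commutator hy (Subgroup.mem_top z)
        set a := φ y * y⁻¹ with hadef
        set b := φ z * z⁻¹ with hbdef
        have hφy : φ y = a * y := by rw [hadef]; group
        have hφz : φ z = b * z := by rw [hbdef]; group
        have ha : a ∈ (⊤ : Subgroup G).lowerCentralSeries (i + 1) := ih y hy
        have hb : b ∈ (⊤ : Subgroup G).lowerCentralSeries 1 := htriv z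
        have hcen : ∀ c ∈ (⊤ : Subgroup G).lowerCentralSeries (i + 1), ∀ w : G, π c * π w = π w * π c := by
          intro c hc w
          refine hcomm c w ?_
          rw [hK, lcs_succ']
          exact Subgroup.commutator_mem_commutator hc (Subgroup.mem_top w)
        have hacen : ∀ w : G ⧸ K, π a * w = w * π a := by
          intro w
          obtain ⟨v, rfl⟩ := QuotientGroup.mk'_surjective K w
          exact hcen a ha v
        have hccen : ∀ w : G ⧸ K, π ⁅y, z⁆ * w = w * π ⁅y, z⁆ := by
          intro w
          obtain ⟨v, rfl⟩ := QuotientGroup.mk'_surjective K w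
          exact hcen _ hyz v
        have hyb : π y * π b = π b * π y := by
          refine hcomm y b (lcs_comm_le 1 i ?_)
          exact Subgroup.commutator_mem_commutator hy hb
        have key : ⁅π a * π y, π b * π z⁆ = ⁅π y, π z⁆ := by
          refine comm_aux _ _ _ _ hacen hyb ?_
          intro w
          rw [← map_commutatorElement]
          exact hccen w
        calc π (φ ⁅y, z⁆) = π ⁅φ y, φ z⁆ := by rw [map_commutatorElement]
          _ = ⁅π (φ y), π (φ z)⁆ := map_commutatorElement _ _ _
          _ = ⁅π a * π y, π b * π z⁆ := by rw [← map_mul, ← map_mul, ← hφy, ← hφz]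
          _ = ⁅π y, π z⁆ := key
          _ = π ⁅y, z⁆ := (map_commutatorElement _ _ _).symm
      exact this hx

private lemma exists_word (S : Set G) (hgen : Subgroup.closure S = ⊤) (g : G) :
    ∃ l : List G, (∀ x ∈ l, x ∈ S ∨ x⁻¹ ∈ S) ∧ l.prod = g := by
  have hg : g ∈ Subgroup.closure S := hgen ▸ Subgroup.mem_top g
  rw [← Subgroup.mem_toSubmonoid, Subgroup.closure_toSubmonoid] at hg
  obtain ⟨l, hl, hp⟩ := Submonoid.exists_list_of_mem_closure hg
  refine ⟨l, fun x hx => ?_, hp⟩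
  rcases hl x hx with h | h
  · exact Or.inl h
  · exact Or.inr (Set.mem_inv.mp h)

private lemma wordLength_le_of_list {S : Set G} {g : G} (l : List G)
    (h1 : ∀ x ∈ l, x ∈ S ∨ x⁻¹ ∈ S) (h2 : l.prod = g) :
    wordLength S g ≤ l.length :=
  Nat.sInf_le ⟨l, h1, rfl, h2⟩

private lemma exists_word_min (S : Set G) (hgen : Subgroup.closure S = ⊤) (g : G) :
    ∃ l : List G, (∀ x ∈ l, x ∈ S ∨ x⁻¹ ∈ S) ∧ l.length = wordLength S g ∧ l.prod = g := by
  obtain ⟨l, h1, h2⟩ := exists_word S hgen g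
  have hne : {n | ∃ l : List G, (∀ x ∈ l, x ∈ S ∨ x⁻¹ ∈ S) ∧ l.length = n ∧ l.prod = g}.Nonempty :=
    ⟨l.length, l, h1, rfl, h2⟩
  exact Nat.sInf_mem hne

private lemma wordLength_mul_le (S : Set G) (hgen : Subgroup.closure S = ⊤) (g h : G) :
    wordLength S (g * h) ≤ wordLength S g + wordLength S h := by
  obtain ⟨l1, ha1, hb1, hc1⟩ := exists_word_min S hgen g
  obtain ⟨l2, ha2, hb2, hc2⟩ := exists_word_min S hgen h
  have := wordLength_le_of_list (S := S) (g := g * h) (l1 ++ l2)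
    (fun x hx => by rcases List.mem_append.mp hx with h | h; exacts [ha1 x h, ha2 x h])
    (by rw [List.prod_append, hc1, hc2])
  simpa [hb1, hb2] using this

/-- The polynomial bound on word lengths of iterates. -/
private lemma poly_bound [Group.IsNilpotent G] (S : Set G) (hgen : Subgroup.closure S = ⊤)
    (k : ℕ) (hk : Group.nilpotencyClass G = k)
    (φ : MulAut G) (htriv : ∀ g : G, φ g * g⁻¹ ∈ (⊤ : Subgroup G).lowerCentralSeries 1) (g : G) :
    ∃ M : ℝ, 0 < M ∧ ∀ n : ℕ, 1 ≤ n →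
      (wordLength S ((φ ^ n) g) : ℝ) ≤ M * (n : ℝ) ^ (k - 1) := by
  rcases Nat.eq_zero_or_pos k with hk0 | hkpos
  · -- trivial group
    subst hk0
    haveI : Subsingleton G := nilpotencyClass_zero_iff_subsingleton.mp hk
    refine ⟨1, one_pos, fun n hn => ?_⟩
    have h0 : wordLength S ((φ ^ n) g) = 0 := by
      have h1 : (φ ^ n) g = 1 := Subsingleton.elim _ _
      have := wordLength_le_of_list (S := S) (g := (φ ^ n) g) []
        (by simp) (by simp [h1])
      simpa using this
    simp [h0]
  · -- the general case
    set D : G → G := fun x => φ x * x⁻¹ with hD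
    set c : ℕ → G := fun j => D^[j] g with hc
    have hc0 : c 0 = g := rfl
    have hcsucc : ∀ j, c (j + 1) = φ (c j) * (c j)⁻¹ := fun j =>
      Function.iterate_succ_apply' D j g
    have hcmem : ∀ j, c j ∈ (⊤ : Subgroup G).lowerCentralSeries j := by
      intro j
      induction j with
      | zero => rw [lowerCentralSeries_zero]; exact Subgroup.mem_top _
      | succ j ih => rw [hcsucc]; exact defect_mem φ htriv j _ ih
    have hck : c k = 1 := by
      have hbot : (⊤ : Subgroup G).lowerCentralSeries k = ⊥ := by
        rw [← hk]; exact lowerCentralSeries_nilpotencyClass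
      have := hcmem k
      rw [hbot, Subgroup.mem_bot] at this
      exact this
    have hφc : ∀ j, φ (c j) = c (j + 1) * c j := by
      intro j; rw [hcsucc]; group
    have hstep : ∀ j n, (φ ^ (n + 1)) (c j) = (φ ^ n) (c (j + 1)) * (φ ^ n) (c j) := by
      intro j n
      calc (φ ^ (n + 1)) (c j) = (φ ^ n) (φ (c j)) := by rw [pow_succ]; rfl
        _ = (φ ^ n) (c (j + 1) * c j) := by rw [hφc]
        _ = (φ ^ n) (c (j + 1)) * (φ ^ n) (c j) := map_mul _ _ _
    set B : ℕ := (Finset.range (k + 1)).sup fun j => wordLength S (c j) with hB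
    have hBle : ∀ j, j ≤ k → wordLength S (c j) ≤ B := fun j hj =>
      Finset.le_sup (f := fun j => wordLength S (c j))
        (Finset.mem_range.mpr (Nat.lt_succ_of_le hj))
    have main : ∀ d j, j + 1 + d = k → ∀ n,
        wordLength S ((φ ^ n) (c j)) ≤ B * (n + 1) ^ d := by
      intro d
      induction d with
      | zero =>
          intro j hj n
          have hcj1 : c (j + 1) = 1 := by rw [show j + 1 = k by omega, hck]
          have hfix : ∀ m, (φ ^ m) (c j) = c j := by
            intro m
            induction m with
            | zero => simp
            | succ m ihm =>
                calc (φ ^ (m + 1)) (c j) = (φ ^ m) (φ (c j)) := by rw [pow_succ]; rfl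
                  _ = (φ ^ m) (c j) := by rw [hφc, hcj1, one_mul]
                  _ = c j := ihm
          rw [hfix n, pow_zero, mul_one]
          exact hBle j (by omega)
      | succ d ihd =>
          intro j hj n
          induction n with
          | zero =>
              simp only [pow_zero]
              have : wordLength S ((1 : MulAut G) (c j)) = wordLength S (c j) := rfl
              rw [this]
              calc wordLength S (c j) ≤ B := hBle j (by omega)
                _ ≤ B * (0 + 1) ^ (d + 1) := by simp
          | succ n ihn =>
              rw [hstep]
              calc wordLength S ((φ ^ n) (c (j + 1)) * (φ ^ n) (c j))
                  ≤ wordLength S ((φ ^ n) (c (j + 1))) + wordLength S ((φ ^ n) (c j)) :=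
                    wordLength_mul_le S hgen _ _
                _ ≤ B * (n + 1) ^ d + B * (n + 1) ^ (d + 1) := by
                    have h1 := ihd (j + 1) (by omega) n
                    exact Nat.add_le_add h1 ihn
                _ = B * ((n + 1) ^ d * (n + 2)) := by ring
                _ ≤ B * ((n + 2) ^ d * (n + 2)) :=
                    Nat.mul_le_mul_left _
                      (Nat.mul_le_mul_right _ (Nat.pow_le_pow_left (by omega) d))
                _ = B * (n + 1 + 1) ^ (d + 1) := by ring
    have hmain := main (k - 1) 0 (by omega)
    refine ⟨((B + 1) * 2 ^ (k - 1) : ℕ), by positivity, fun n hn => ?_⟩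
    have h1 : wordLength S ((φ ^ n) g) ≤ (B + 1) * 2 ^ (k - 1) * n ^ (k - 1) := by
      calc wordLength S ((φ ^ n) g) = wordLength S ((φ ^ n) (c 0)) := by rw [hc0]
        _ ≤ B * (n + 1) ^ (k - 1) := hmain n
        _ ≤ B * (2 * n) ^ (k - 1) :=
            Nat.mul_le_mul_left _ (Nat.pow_le_pow_left (by omega) _)
        _ = B * 2 ^ (k - 1) * n ^ (k - 1) := by rw [mul_pow]; ring
        _ ≤ (B + 1) * 2 ^ (k - 1) * n ^ (k - 1) := by
            exact Nat.mul_le_mul_right _ (Nat.mul_le_mul_right _ (by omega))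
    calc (wordLength S ((φ ^ n) g) : ℝ)
        ≤ ((B + 1) * 2 ^ (k - 1) * n ^ (k - 1) : ℕ) := by exact_mod_cast h1
      _ = ((B + 1) * 2 ^ (k - 1) : ℕ) * (n : ℝ) ^ (k - 1) := by push_cast; ring

end Aux

theorem stmt13 {N : Type*} [Group N] [Group.IsNilpotent N] (S : Set N) (hS : S.Finite)
    (hSne : S.Nonempty) (hgen : Subgroup.closure S = ⊤)
    (htf : ∀ g : N, g ≠ 1 → ¬IsOfFinOrder g) (k : ℕ) (hk : Group.nilpotencyClass N = k)
    (φ : MulAut N) (htriv : ∀ g : N, φ g * g⁻¹ ∈ (⊤ : Subgroup N).lowerCentralSeries 1) :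
    (∀ g : N, ∃ M : ℝ, 0 < M ∧ ∀ n : ℕ, 1 ≤ n →
      (wordLength S ((φ ^ n) g) : ℝ) ≤ M * (n : ℝ) ^ (k - 1)) ∧
    entropy S φ = 1 := by
  have part1 : ∀ g : N, ∃ M : ℝ, 0 < M ∧ ∀ n : ℕ, 1 ≤ n →
      (wordLength S ((φ ^ n) g) : ℝ) ≤ M * (n : ℝ) ^ (k - 1) :=
    fun g => poly_bound S hgen k hk φ htriv g
  refine ⟨part1, ?_⟩
  -- each limsup equals 1
  have limsup_eq : ∀ s ∈ S, Filter.limsup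
      (fun n : ℕ => ((max (wordLength S ((φ ^ n) s)) 1 : ℕ) : ℝ) ^ (1 / (n : ℝ)))
      Filter.atTop = 1 := by
    intro s _
    obtain ⟨M, hM, hMb⟩ := part1 s
    set u : ℕ → ℝ := fun n => ((max (wordLength S ((φ ^ n) s)) 1 : ℕ) : ℝ) with hu
    have hu1 : ∀ n, 1 ≤ u n := by
      intro n
      have h1 : (1 : ℕ) ≤ max (wordLength S ((φ ^ n) s)) 1 := le_max_right _ _
      show (1 : ℝ) ≤ ((max (wordLength S ((φ ^ n) s)) 1 : ℕ) : ℝ)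
      exact_mod_cast h1
    have hub : ∀ n : ℕ, 1 ≤ n → u n ≤ (M + 1) * (n : ℝ) ^ (k - 1) := by
      intro n hn
      have hn1 : (1 : ℝ) ≤ (n : ℝ) := by exact_mod_cast hn
      have hp1 : (1 : ℝ) ≤ (n : ℝ) ^ (k - 1) := by
        calc (1 : ℝ) = 1 ^ (k - 1) := (one_pow _).symm
          _ ≤ (n : ℝ) ^ (k - 1) := pow_le_pow_left₀ zero_le_one hn1 _
      have hu' : u n = max ((wordLength S ((φ ^ n) s) : ℝ)) 1 := by
        rw [hu]; push_cast; rfl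
      rw [hu']
      refine max_le ?_ ?_
      · calc (wordLength S ((φ ^ n) s) : ℝ) ≤ M * (n : ℝ) ^ (k - 1) := hMb n hn
          _ ≤ (M + 1) * (n : ℝ) ^ (k - 1) := by nlinarith
      · nlinarith
    have t1 : Filter.Tendsto (fun n : ℕ => ((n : ℝ)) ^ (1 / (n : ℝ))) atTop (𝓝 1) := by
      have := tendsto_rpow_div.comp (tendsto_natCast_atTop_atTop (R := ℝ))
      simpa [Function.comp_def] using this
    have t2 : Filter.Tendsto (fun n : ℕ => (M + 1) ^ (1 / (n : ℝ))) atTop (𝓝 1) := by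
      have h0 : Filter.Tendsto (fun n : ℕ => 1 / (n : ℝ)) atTop (𝓝 0) :=
        tendsto_one_div_atTop_nhds_zero_nat
      have := Filter.Tendsto.rpow (tendsto_const_nhds (x := M + 1)) h0
        (Or.inl (by positivity))
      simpa using this
    have htv : Filter.Tendsto
        (fun n : ℕ => (M + 1) ^ (1 / (n : ℝ)) * ((n : ℝ) ^ (1 / (n : ℝ))) ^ (k - 1))
        atTop (𝓝 1) := by
      have := t2.mul (t1.pow (k - 1))
      simpa using this
    have hlow : ∀ᶠ n : ℕ in atTop, (1 : ℝ) ≤ u n ^ (1 / (n : ℝ)) := by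
      filter_upwards [eventually_ge_atTop 1] with n hn
      calc (1 : ℝ) = 1 ^ (1 / (n : ℝ)) := (Real.one_rpow _).symm
        _ ≤ u n ^ (1 / (n : ℝ)) := Real.rpow_le_rpow zero_le_one (hu1 n) (by positivity)
    have hhigh : ∀ᶠ n : ℕ in atTop, u n ^ (1 / (n : ℝ)) ≤
        (M + 1) ^ (1 / (n : ℝ)) * ((n : ℝ) ^ (1 / (n : ℝ))) ^ (k - 1) := by
      filter_upwards [eventually_ge_atTop 1] with n hn
      have hn0 : (0 : ℝ) ≤ (n : ℝ) := Nat.cast_nonneg n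
      have h1 : u n ^ (1 / (n : ℝ)) ≤ ((M + 1) * (n : ℝ) ^ (k - 1)) ^ (1 / (n : ℝ)) :=
        Real.rpow_le_rpow (le_trans zero_le_one (hu1 n)) (hub n hn) (by positivity)
      refine h1.trans (le_of_eq ?_)
      rw [Real.mul_rpow (by positivity) (by positivity)]
      congr 1
      rw [← Real.rpow_natCast (n : ℝ) (k - 1), ← Real.rpow_mul hn0,
        mul_comm ((k - 1 : ℕ) : ℝ) (1 / (n : ℝ)), Real.rpow_mul hn0, Real.rpow_natCast]
    have htu : Filter.Tendsto (fun n : ℕ => u n ^ (1 / (n : ℝ))) atTop (𝓝 1) :=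
      tendsto_of_tendsto_of_tendsto_of_le_of_le' tendsto_const_nhds htv hlow hhigh
    exact htu.limsup_eq
  -- assemble the supremum
  have hle : ∀ s : N, (⨆ _ : s ∈ S, Filter.limsup
      (fun n : ℕ => ((max (wordLength S ((φ ^ n) s)) 1 : ℕ) : ℝ) ^ (1 / (n : ℝ)))
      Filter.atTop) ≤ 1 := by
    intro s
    by_cases hs : s ∈ S
    · rw [ciSup_pos hs]
      exact le_of_eq (limsup_eq s hs)
    · haveI : IsEmpty (s ∈ S : Prop) := ⟨hs⟩
      rw [Real.iSup_of_isEmpty]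
      exact zero_le_one
  rw [entropy]
  refine le_antisymm (Real.iSup_le hle zero_le_one) ?_
  obtain ⟨s₀, hs₀⟩ := hSne
  have hbdd : BddAbove (Set.range fun s : N => ⨆ _ : s ∈ S, Filter.limsup
      (fun n : ℕ => ((max (wordLength S ((φ ^ n) s)) 1 : ℕ) : ℝ) ^ (1 / (n : ℝ)))
      Filter.atTop) := by
    refine ⟨1, ?_⟩
    rintro x ⟨s, rfl⟩
    exact hle s
  calc (1 : ℝ) = (⨆ _ : s₀ ∈ S, Filter.limsup
      (fun n : ℕ => ((max (wordLength S ((φ ^ n) s₀)) 1 : ℕ) : ℝ) ^ (1 / (n : ℝ)))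
      Filter.atTop) := by rw [ciSup_pos hs₀, limsup_eq s₀ hs₀]
    _ ≤ _ := le_ciSup hbdd s₀
end
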